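/- Let (X_j, ξ_j), j ≥ 1, be i.i.d. ℝ²-valued random vectors with E[X₁] = 0 and E[X₁²] = σ² ∈ (0, ∞), and let (a_n) be a sequence of positive reals with a_n → ∞, a_n²/n → 0, and a_n² P(ξ₁ > n) → 0 as n → ∞. Set T_k = X₁ + ⋯ + X_k and fix T > 0. Then E[ sup_{k ≤ ⌊T a_n²⌋} | Σ_{j=1}^k X_j 1_{ξ_j > n} | / a_n ] → 0 as n → ∞. -/

import Mathlib

open MeasureTheory ProbabilityTheory Real Filter

theorem stmt8 {Ω : Type*} [MeasurableSpace Ω] (μ : Measure Ω) [IsProbabilityMeasure μ]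
    (X ξ : ℕ → Ω → ℝ) (hmeas : ∀ j, Measurable (fun ω => (X j ω, ξ j ω)))
    (hindep : iIndepFun (fun j ω => (X j ω, ξ j ω)) μ)
    (hident : ∀ j, IdentDistrib (fun ω => (X j ω, ξ j ω)) (fun ω => (X 1 ω, ξ 1 ω)) μ μ)
    (σ : ℝ) (hσ : 0 < σ)
    (hmean : ∫ ω, X 1 ω ∂μ = 0)
    (hvar : ∫ ω, X 1 ω ^ 2 ∂μ = σ ^ 2)
    (hX2 : Integrable (fun ω => X 1 ω ^ 2) μ)
    (a : ℕ → ℝ) (hapos : ∀ n, 0 < a n)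
    (haTop : Tendsto a atTop atTop)
    (ha2 : Tendsto (fun n => a n ^ 2 / (n : ℝ)) atTop (nhds 0))
    (haξ : Tendsto (fun n => a n ^ 2 * (μ {ω | (n : ℝ) < ξ 1 ω}).toReal) atTop (nhds 0))
    (T : ℝ) (hT : 0 < T) :
    Tendsto (fun n : ℕ =>
        ∫ ω, ((Finset.range (⌊T * a n ^ 2⌋₊ + 1)).sup' (by simp) fun k =>
          |∑ j ∈ Finset.Icc 1 k, if (n : ℝ) < ξ j ω then X j ω else 0|) / a n ∂μ)
      atTop (nhds 0) := by
  have hmX : ∀ j, Measurable (X j) := fun j => measurable_fst.comp (hmeas j)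
  have hmξ : ∀ j, Measurable (ξ j) := fun j => measurable_snd.comp (hmeas j)
  have hX1L2 : MemLp (X 1) 2 μ :=
    (memLp_two_iff_integrable_sq (hmX 1).aestronglyMeasurable).2 hX2
  have hX1int : Integrable (X 1) μ := hX1L2.integrable one_le_two
  set p : ℕ → ℝ := fun n => (μ {ω | (n : ℝ) < ξ 1 ω}).toReal with hp
  -- the truncated summand and its distributional copy
  set Y : ℕ → ℕ → Ω → ℝ := fun n j ω => if (n : ℝ) < ξ j ω then X j ω else 0 with hY
  have hF : ∀ n : ℕ, Measurable (fun q : ℝ × ℝ => |if (n : ℝ) < q.2 then q.1 else 0|) := by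
    intro n
    exact (Measurable.ite (measurableSet_lt measurable_const measurable_snd)
      measurable_fst measurable_const).abs
  have hid : ∀ n j, IdentDistrib (fun ω => |Y n j ω|) (fun ω => |Y n 1 ω|) μ μ := by
    intro n j
    exact (hident j).comp (hF n)
  have hY1int : ∀ n, Integrable (fun ω => |Y n 1 ω|) μ := by
    intro n
    refine Integrable.mono' hX1int.abs ?_ ?_
    · exact (((Measurable.ite (measurableSet_lt measurable_const (hmξ 1))
        (hmX 1) measurable_const)).abs).aestronglyMeasurable
    · refine Eventually.of_forall fun ω => ?_
      simp only [hY, Real.norm_eq_abs, abs_abs]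
      split <;> simp [abs_nonneg]
  have hYjint : ∀ n j, Integrable (fun ω => |Y n j ω|) μ := fun n j =>
    ((hid n j).integrable_iff).2 (hY1int n)
  -- Cauchy–Schwarz bound on the mean of |Y n 1|
  have hCS : ∀ n, ∫ ω, |Y n 1 ω| ∂μ ≤ σ * Real.sqrt (p n) := by
    intro n
    have hAmeas : MeasurableSet {ω | (n : ℝ) < ξ 1 ω} :=
      measurableSet_lt measurable_const (hmξ 1)
    have h22 : (2 : ℝ).HolderConjugate 2 := Real.HolderConjugate.two_two
    have hfL : MemLp (fun ω => |X 1 ω|) (ENNReal.ofReal 2) μ := by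
      have : (ENNReal.ofReal 2) = 2 := by norm_num
      rw [this]
      exact hX1L2.abs
    have key := integral_mul_le_Lp_mul_Lq_of_nonneg (μ := μ) h22
      (f := fun ω => |X 1 ω|)
      (g := Set.indicator {ω | (n : ℝ) < ξ 1 ω} (fun _ => (1:ℝ)))
      (Eventually.of_forall fun ω => abs_nonneg _)
      (Eventually.of_forall fun ω => Set.indicator_nonneg (fun _ _ => zero_le_one) ω)
      hfL ?_
    · have hleft : ∫ ω, |Y n 1 ω| ∂μ =
          ∫ ω, |X 1 ω| * Set.indicator {ω | (n : ℝ) < ξ 1 ω} (fun _ => (1:ℝ)) ω ∂μ := by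
        refine integral_congr_ae (Eventually.of_forall fun ω => ?_)
        by_cases h : (n : ℝ) < ξ 1 ω <;>
          simp [hY, Set.indicator_apply, h]
      have hf2 : ∫ ω, |X 1 ω| ^ (2:ℝ) ∂μ = σ ^ 2 := by
        rw [← hvar]
        refine integral_congr_ae (Eventually.of_forall fun ω => ?_)
        simp only []
        rw [show ((2:ℝ)) = ((2:ℕ):ℝ) by norm_num, Real.rpow_natCast, sq_abs]
      have hg2 : ∫ ω, (Set.indicator {ω | (n : ℝ) < ξ 1 ω} (fun _ => (1:ℝ)) ω) ^ (2:ℝ) ∂μ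
          = p n := by
        have : ∀ ω, (Set.indicator {ω | (n : ℝ) < ξ 1 ω} (fun _ => (1:ℝ)) ω) ^ (2:ℝ)
            = Set.indicator {ω | (n : ℝ) < ξ 1 ω} (fun _ => (1:ℝ)) ω := by
          intro ω
          by_cases h : ω ∈ {ω | (n : ℝ) < ξ 1 ω} <;> simp [Set.indicator_apply, h]
        rw [integral_congr_ae (Eventually.of_forall this)]
        rw [integral_indicator_const (1:ℝ) hAmeas]
        simp [hp, Measure.real]
      rw [hleft]
      calc ∫ ω, |X 1 ω| * Set.indicator {ω | (n : ℝ) < ξ 1 ω} (fun _ => (1:ℝ)) ω ∂μ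
          ≤ (∫ ω, |X 1 ω| ^ (2:ℝ) ∂μ) ^ (1/(2:ℝ)) *
            (∫ ω, (Set.indicator {ω | (n : ℝ) < ξ 1 ω} (fun _ => (1:ℝ)) ω) ^ (2:ℝ) ∂μ) ^ (1/(2:ℝ))
            := key
        _ = σ * Real.sqrt (p n) := by
            rw [hf2, hg2, ← Real.sqrt_eq_rpow, ← Real.sqrt_eq_rpow, Real.sqrt_sq hσ.le]
    · have : (ENNReal.ofReal 2) = 2 := by norm_num
      rw [this]
      exact memLp_indicator_const 2 hAmeas (1:ℝ) (Or.inr (measure_ne_top μ _))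
  -- nonnegativity of the sup
  have hnn : ∀ (n : ℕ) (ω : Ω), 0 ≤ ((Finset.range (⌊T * a n ^ 2⌋₊ + 1)).sup' (by simp) fun k =>
      |∑ j ∈ Finset.Icc 1 k, if (n : ℝ) < ξ j ω then X j ω else 0|) := by
    intro n ω
    refine le_trans (abs_nonneg (∑ j ∈ Finset.Icc 1 0, if (n : ℝ) < ξ j ω then X j ω else 0)) ?_
    exact Finset.le_sup' (fun k => |∑ j ∈ Finset.Icc 1 k, if (n : ℝ) < ξ j ω then X j ω else 0|)
      (Finset.mem_range.mpr (Nat.succ_pos _))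
  -- the main per-n bound
  have hmain : ∀ n : ℕ,
      (∫ ω, ((Finset.range (⌊T * a n ^ 2⌋₊ + 1)).sup' (by simp) fun k =>
        |∑ j ∈ Finset.Icc 1 k, if (n : ℝ) < ξ j ω then X j ω else 0|) / a n ∂μ)
      ≤ T * σ * Real.sqrt (a n ^ 2 * p n) := by
    intro n
    set m := ⌊T * a n ^ 2⌋₊ with hm
    have hgint : Integrable (fun ω => ∑ j ∈ Finset.Icc 1 m, |Y n j ω|) μ :=
      integrable_finset_sum _ (fun j _ => hYjint n j)
    have hptw : ∀ ω : Ω, ((Finset.range (m + 1)).sup' (by simp) fun k =>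
        |∑ j ∈ Finset.Icc 1 k, if (n : ℝ) < ξ j ω then X j ω else 0|)
        ≤ ∑ j ∈ Finset.Icc 1 m, |Y n j ω| := by
      intro ω
      refine Finset.sup'_le _ _ fun k hk => ?_
      have hk' : k ≤ m := Nat.lt_succ_iff.mp (Finset.mem_range.mp hk)
      calc |∑ j ∈ Finset.Icc 1 k, if (n : ℝ) < ξ j ω then X j ω else 0|
          ≤ ∑ j ∈ Finset.Icc 1 k, |Y n j ω| := Finset.abs_sum_le_sum_abs _ _
        _ ≤ ∑ j ∈ Finset.Icc 1 m, |Y n j ω| :=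
            Finset.sum_le_sum_of_subset_of_nonneg
              (Finset.Icc_subset_Icc_right hk') (fun _ _ _ => abs_nonneg _)
    have h1 : (∫ ω, ((Finset.range (m + 1)).sup' (by simp) fun k =>
        |∑ j ∈ Finset.Icc 1 k, if (n : ℝ) < ξ j ω then X j ω else 0|) ∂μ)
        ≤ ∫ ω, ∑ j ∈ Finset.Icc 1 m, |Y n j ω| ∂μ :=
      integral_mono_of_nonneg (Eventually.of_forall (hnn n)) hgint (Eventually.of_forall hptw)
    have h2 : (∫ ω, ∑ j ∈ Finset.Icc 1 m, |Y n j ω| ∂μ)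
        = (m : ℝ) * ∫ ω, |Y n 1 ω| ∂μ := by
      rw [integral_finset_sum _ (fun j _ => hYjint n j)]
      have : ∀ j ∈ Finset.Icc 1 m, (∫ ω, |Y n j ω| ∂μ) = ∫ ω, |Y n 1 ω| ∂μ :=
        fun j _ => (hid n j).integral_eq
      rw [Finset.sum_congr rfl this, Finset.sum_const, Nat.card_Icc]
      simp [nsmul_eq_mul]
    have hI0 : 0 ≤ ∫ ω, |Y n 1 ω| ∂μ := integral_nonneg fun ω => abs_nonneg _
    have h3 : (∫ ω, ∑ j ∈ Finset.Icc 1 m, |Y n j ω| ∂μ) ≤ (T * a n ^ 2) * (σ * Real.sqrt (p n)) := by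
      rw [h2]
      have hmle : (m : ℝ) ≤ T * a n ^ 2 := Nat.floor_le (by positivity)
      exact mul_le_mul hmle (hCS n) hI0 (by positivity)
    have h4 : (∫ ω, ((Finset.range (m + 1)).sup' (by simp) fun k =>
        |∑ j ∈ Finset.Icc 1 k, if (n : ℝ) < ξ j ω then X j ω else 0|) / a n ∂μ)
        = (∫ ω, ((Finset.range (m + 1)).sup' (by simp) fun k =>
        |∑ j ∈ Finset.Icc 1 k, if (n : ℝ) < ξ j ω then X j ω else 0|) ∂μ) / a n :=
      integral_div _ _
    rw [h4]
    have h5 : (∫ ω, ((Finset.range (m + 1)).sup' (by simp) fun k =>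
        |∑ j ∈ Finset.Icc 1 k, if (n : ℝ) < ξ j ω then X j ω else 0|) ∂μ) / a n
        ≤ ((T * a n ^ 2) * (σ * Real.sqrt (p n))) / a n :=
      (div_le_div_iff_of_pos_right (hapos n)).mpr (h1.trans h3)
    refine h5.trans (le_of_eq ?_)
    have hsq : Real.sqrt (a n ^ 2 * p n) = a n * Real.sqrt (p n) := by
      rw [Real.sqrt_mul (sq_nonneg _), Real.sqrt_sq (hapos n).le]
    rw [hsq, div_eq_iff (hapos n).ne']
    ring
  -- squeeze
  have hup : Tendsto (fun n => T * σ * Real.sqrt (a n ^ 2 * p n)) atTop (nhds 0) := by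
    have h1 : Tendsto (fun n => Real.sqrt (a n ^ 2 * p n)) atTop (nhds 0) := by
      have := (Real.continuous_sqrt.tendsto 0).comp haξ
      simpa [Function.comp_def, hp] using this
    have := h1.const_mul (T * σ)
    simpa using this
  have hlow : ∀ n, 0 ≤ (∫ ω, ((Finset.range (⌊T * a n ^ 2⌋₊ + 1)).sup' (by simp) fun k =>
      |∑ j ∈ Finset.Icc 1 k, if (n : ℝ) < ξ j ω then X j ω else 0|) / a n ∂μ) := by
    intro n
    exact integral_nonneg fun ω => div_nonneg (hnn n ω) (hapos n).le
  exact squeeze_zero hlow hmain hup
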